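/- Fix a positive integer m and a constant r₀ > 0. For i, j, l ∈ {1, …, m}, let ĉ_i, â_{ij}, b̂_{ijl}, Î_i : ℤ → ℝ be almost periodic sequences and let γ_{ij}, ω_{ijl}, v_{ijl} : ℤ → ℕ be almost periodic sequences. Let f_j, g_j : ℝ → ℝ and positive constants ϵ_j, ε_j, N_j satisfy: (H1) |f_j(u) − f_j(v)| ≤ ϵ_j|u − v| and |g_j(u) − g_j(v)| ≤ ε_j|u − v| for all u, v ∈ ℝ; (H2) |g_j(u)| ≤ N_j for all u ∈ ℝ; (H3) 1 − ĉ_i(n) > 0 for all n ∈ ℤ and ĉ_i⁻ := inf_{n∈ℤ} ĉ_i(n) > 0 for each i. Set â⁺_{ij} = sup_n |â_{ij}(n)|, b̂⁺_{ijl} = sup_n |b̂_{ijl}(n)|, Î⁺_i = sup_n |Î_i(n)|, L = max_i (Î⁺_i / ĉ_i⁻), η_i = Σ_{j=1}^m [ â⁺_{ij}(|f_j(0)| + ϵ_j r₀) + (|g_j(0)| + ε_j r₀)·Σ_{l=1}^m b̂⁺_{ijl}(|g_l(0)| + ε_l r₀) ], and η̄_i = Σ_{j=1}^m â⁺_{ij}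 ϵ_j + Σ_{j=1}^m Σ_{l=1}^m b̂⁺_{ijl}(N_l ε_j + N_j ε_l). Assume (H4): max_i (η_i / ĉ_i⁻) + L ≤ r₀ and max_i η̄_i < min_i ĉ_i⁻. Then the high-order Hopfield neural network system x_i(n+1) − x_i(n) = −ĉ_i(n)x_i(n) + Σ_{j=1}^m â_{ij}(n) f_j(x_j(n − γ_{ij}(n))) + Σ_{j=1}^m Σ_{l=1}^m b̂_{ijl}(n) g_j(x_j(n − ω_{ijl}(n))) g_l(x_l(n − v_{ijl}(n))) + Î_i(n), i = 1, …, m, n ∈ ℤ, has exactly one solution x = (x_1, …, x_m) : ℤ → ℝ^m such that each component x_i is an almost periodic sequence and sup_{n∈ℤ} max_{1≤i≤m} |x_i(n)| ≤ r₀. -/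

import Mathlib

open Filter Topology

/-- A sequence `h : ℤ → ℝ` is almost periodic: for every `ε > 0` there is a positive
integer `ℓ` such that every set of `ℓ` consecutive integers contains an `ε`-almost
period `τ`. -/
def APseq (h : ℤ → ℝ) : Prop :=
  ∀ ε : ℝ, 0 < ε → ∃ ℓ : ℕ, 0 < ℓ ∧ ∀ p : ℤ, ∃ τ : ℤ, p ≤ τ ∧ τ < p + ℓ ∧
    ∀ n : ℤ, |h (n + τ) - h n| < ε

lemma prodDiff (f g : ℕ → ℝ) (k : ℕ)
    (hf : ∀ j < k, 0 ≤ f j ∧ f j ≤ 1) (hg : ∀ j < k, 0 ≤ g j ∧ g j ≤ 1) :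
    |∏ j ∈ Finset.range k, f j - ∏ j ∈ Finset.range k, g j| ≤
      ∑ j ∈ Finset.range k, |f j - g j| := by
  induction k with
  | zero => simp
  | succ k ih =>
    have hf' : ∀ j < k, 0 ≤ f j ∧ f j ≤ 1 := fun j hj => hf j (by omega)
    have hg' : ∀ j < k, 0 ≤ g j ∧ g j ≤ 1 := fun j hj => hg j (by omega)
    have hfk := hf k (by omega)
    have hgk := hg k (by omega)
    have hPf : |∏ j ∈ Finset.range k, f j| ≤ 1 := by
      rw [abs_of_nonneg (Finset.prod_nonneg fun j hj => (hf' j (Finset.mem_range.1 hj)).1)]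
      exact Finset.prod_le_one (fun j hj => (hf' j (Finset.mem_range.1 hj)).1)
        (fun j hj => (hf' j (Finset.mem_range.1 hj)).2)
    have hPg : |∏ j ∈ Finset.range k, g j| ≤ 1 := by
      rw [abs_of_nonneg (Finset.prod_nonneg fun j hj => (hg' j (Finset.mem_range.1 hj)).1)]
      exact Finset.prod_le_one (fun j hj => (hg' j (Finset.mem_range.1 hj)).1)
        (fun j hj => (hg' j (Finset.mem_range.1 hj)).2)
    rw [Finset.prod_range_succ, Finset.prod_range_succ, Finset.sum_range_succ]
    have key : (∏ j ∈ Finset.range k, f j) * f k - (∏ j ∈ Finset.range k, g j) * g k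
        = ((∏ j ∈ Finset.range k, f j) - (∏ j ∈ Finset.range k, g j)) * f k
          + (∏ j ∈ Finset.range k, g j) * (f k - g k) := by ring
    rw [key]
    calc |((∏ j ∈ Finset.range k, f j) - (∏ j ∈ Finset.range k, g j)) * f k
          + (∏ j ∈ Finset.range k, g j) * (f k - g k)|
        ≤ |(∏ j ∈ Finset.range k, f j) - (∏ j ∈ Finset.range k, g j)| * |f k|
          + |∏ j ∈ Finset.range k, g j| * |f k - g k| := by
          refine le_trans (abs_add_le _ _) ?_
          rw [abs_mul, abs_mul]
      _ ≤ (∑ j ∈ Finset.range k, |f j - g j|) * 1 + 1 * |f k - g k| := by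
          have hfk1 : |f k| ≤ 1 := by rw [abs_of_nonneg hfk.1]; exact hfk.2
          refine add_le_add (mul_le_mul (ih hf' hg') hfk1 (abs_nonneg _)
            (Finset.sum_nonneg fun j hj => abs_nonneg _))
            (mul_le_mul_of_nonneg_right hPg (abs_nonneg _))
      _ = (∑ j ∈ Finset.range k, |f j - g j|) + |f k - g k| := by ring

lemma abs_tsum_le' {f g : ℕ → ℝ} (hg : Summable g) (h : ∀ k, |f k| ≤ g k) :
    |∑' k, f k| ≤ ∑' k, g k := by
  have hfa : Summable fun k => |f k| :=
    Summable.of_nonneg_of_le (fun k => abs_nonneg _) h hg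
  calc |∑' k, f k| ≤ ∑' k, |f k| := by
        have h1 : ‖∑' k, f k‖ ≤ ∑' k, ‖f k‖ :=
          norm_tsum_le_tsum_norm (by simpa only [Real.norm_eq_abs] using hfa)
        simpa only [Real.norm_eq_abs] using h1
    _ ≤ ∑' k, g k := Summable.tsum_le_tsum h hfa hg

lemma summable_of_abs_le_geom {f : ℕ → ℝ} {M r : ℝ} (hr0 : 0 ≤ r) (hr1 : r < 1)
    (h : ∀ k, |f k| ≤ M * r ^ k) : Summable f := by
  have hgeo : Summable fun k : ℕ => r ^ k := summable_geometric_of_lt_one hr0 hr1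
  have hMg : Summable fun k : ℕ => M * r ^ k := hgeo.mul_left M
  refine Summable.of_norm (Summable.of_nonneg_of_le (fun k => norm_nonneg _)
    (fun k => h k) hMg)

lemma tsum_geom_mul {M r : ℝ} (hr0 : 0 ≤ r) (hr1 : r < 1) :
    ∑' k : ℕ, M * r ^ k = M / (1 - r) := by
  rw [tsum_mul_left, tsum_geometric_of_lt_one hr0 hr1, div_eq_mul_inv]

/-- uniform approximation by almost periodic sequences preserves almost periodicity -/
lemma APseq_of_uniform_approx (x : ℤ → ℝ)
    (h : ∀ ε : ℝ, 0 < ε → ∃ y : ℤ → ℝ, APseq y ∧ ∀ n, |x n - y n| ≤ ε) :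
    APseq x := by
  intro ε hε
  obtain ⟨y, hy, hxy⟩ := h (ε/3) (by linarith)
  obtain ⟨ℓ, hℓ, hτ⟩ := hy (ε/3) (by linarith)
  refine ⟨ℓ, hℓ, fun p => ?_⟩
  obtain ⟨τ, h1, h2, h3⟩ := hτ p
  refine ⟨τ, h1, h2, fun n => ?_⟩
  calc |x (n + τ) - x n|
      = |(x (n + τ) - y (n + τ)) + (y (n + τ) - y n) + (y n - x n)| := by congr 1; ring
    _ ≤ |x (n + τ) - y (n + τ)| + |y (n + τ) - y n| + |y n - x n| := abs_add_three _ _ _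
    _ < ε := by
        have hA := hxy (n + τ)
        have hB := hxy n
        have hC := h3 n
        rw [abs_sub_comm (y n) (x n)]
        linarith


lemma commonAP {ι : Type*} [Fintype ι] [DecidableEq ι] (h : ι → ℤ → ℝ)
    (hh : ∀ α, APseq (h α)) :
    ∀ ε : ℝ, 0 < ε → ∃ ℓ : ℕ, 0 < ℓ ∧ ∀ p : ℤ, ∃ τ : ℤ, p ≤ τ ∧ τ < p + ℓ ∧
      ∀ α, ∀ n : ℤ, |h α (n + τ) - h α n| < ε := by
  classical
  intro ε hε
  have hε3 : 0 < ε / 3 := by linarith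
  choose ℓα hℓα hτα using fun α => hh α (ε/3) hε3
  -- for each integer k choose an almost period in [-k, -k+ℓα)
  have key : ∀ α (k : ℤ), ∃ τ : ℤ, -k ≤ τ ∧ τ < -k + ℓα α ∧
      ∀ n : ℤ, |h α (n + τ) - h α n| < ε/3 := fun α k => hτα α (-k)
  choose τf hτ1 hτ2 hτ3 using key
  -- Φ k α = k + τf α k ∈ [0, ℓα α)
  set Φ : ℤ → ι → ℤ := fun k α => k + τf α k with hΦ
  have hΦmem : ∀ k, Φ k ∈ Fintype.piFinset (fun α => Finset.Ico (0:ℤ) (ℓα α)) := by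
    intro k
    rw [Fintype.mem_piFinset]
    intro α
    rw [Finset.mem_Ico]
    simp only [hΦ]
    constructor
    · have := hτ1 α k; omega
    · have := hτ2 α k; omega
  set Box := Fintype.piFinset (fun α => Finset.Ico (0:ℤ) (ℓα α)) with hBox
  set reps : Finset ℤ :=
    Box.image (fun w => if hw : ∃ k : ℤ, Φ k = w then hw.choose else 0) with hreps
  have hrepsne : reps.Nonempty := by
    refine ⟨_, Finset.mem_image.2 ⟨Φ 0, hΦmem 0, rfl⟩⟩
  have hrep : ∀ s : ℤ, ∃ k ∈ reps, Φ k = Φ s := by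
    intro s
    have hw : ∃ k : ℤ, Φ k = Φ s := ⟨s, rfl⟩
    refine ⟨hw.choose, ?_, hw.choose_spec⟩
    rw [hreps, Finset.mem_image]
    refine ⟨Φ s, hΦmem s, ?_⟩
    rw [dif_pos hw]
  set Mx := reps.max' hrepsne with hMx
  set Mn := reps.min' hrepsne with hMn
  have hMnMx : Mn ≤ Mx := Finset.min'_le _ _ (reps.max'_mem hrepsne)
  refine ⟨(Mx - Mn).toNat + 1, Nat.succ_pos _, ?_⟩
  intro p
  obtain ⟨k, hkreps, hkΦ⟩ := hrep (p + Mx)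
  have hkMx : k ≤ Mx := Finset.le_max' _ _ hkreps
  have hkMn : Mn ≤ k := Finset.min'_le _ _ hkreps
  refine ⟨p + Mx - k, by omega, by omega, ?_⟩
  intro α n
  -- Φ k α = Φ (p+Mx) α : k + τf α k = (p+Mx) + τf α (p+Mx)
  have hΦeq : k + τf α k = (p + Mx) + τf α (p + Mx) := congrFun hkΦ α
  set s := p + Mx with hs
  have h1 : |h α ((n + (s - k)) + τf α s) - h α (n + (s - k))| < ε/3 := hτ3 α s _
  have h2 : |h α (n + τf α k) - h α n| < ε/3 := hτ3 α k n
  have harg : (n + (s - k)) + τf α s = n + τf α k := by omega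
  rw [harg] at h1
  calc |h α (n + (s - k)) - h α n|
      = |(h α (n + τf α k) - h α n) - (h α (n + τf α k) - h α (n + (s - k)))| := by
        congr 1; ring
    _ ≤ |h α (n + τf α k) - h α n| + |h α (n + τf α k) - h α (n + (s - k))| := abs_sub _ _
    _ < ε/3 + ε/3 := add_lt_add h2 h1
    _ < ε := by linarith



set_option maxHeartbeats 4000000 in
/-- Existence and uniqueness of a bounded almost periodic solution of the high-order
Hopfield neural network system (the `t = q^n` transform of the network on the quantum
time scale) under hypotheses (H1)–(H4). -/
theorem stmt_16 (m : ℕ) (hm : 0 < m) (r₀ : ℝ) (hr₀ : 0 < r₀)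
    (c I : Fin m → ℤ → ℝ)
    (a : Fin m → Fin m → ℤ → ℝ)
    (b : Fin m → Fin m → Fin m → ℤ → ℝ)
    (γ : Fin m → Fin m → ℤ → ℕ)
    (ω v : Fin m → Fin m → Fin m → ℤ → ℕ)
    (hc : ∀ i, APseq (c i)) (hI : ∀ i, APseq (I i))
    (ha : ∀ i j, APseq (a i j)) (hb : ∀ i j l, APseq (b i j l))
    (hγ : ∀ i j, APseq fun n => (γ i j n : ℝ))
    (hω : ∀ i j l, APseq fun n => (ω i j l n : ℝ))
    (hv : ∀ i j l, APseq fun n => (v i j l n : ℝ))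
    (F G : Fin m → ℝ → ℝ) (ep ve N : Fin m → ℝ)
    (hep : ∀ j, 0 < ep j) (hve : ∀ j, 0 < ve j) (hN : ∀ j, 0 < N j)
    -- (H1)
    (H1f : ∀ j, ∀ u w : ℝ, |F j u - F j w| ≤ ep j * |u - w|)
    (H1g : ∀ j, ∀ u w : ℝ, |G j u - G j w| ≤ ve j * |u - w|)
    -- (H2)
    (H2 : ∀ j, ∀ u : ℝ, |G j u| ≤ N j)
    -- infima ĉᵢ⁻ and suprema â⁺ᵢⱼ, b̂⁺ᵢⱼₗ, Î⁺ᵢ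
    (cm Ip : Fin m → ℝ)
    (ap : Fin m → Fin m → ℝ) (bp : Fin m → Fin m → Fin m → ℝ)
    (hcm : ∀ i, IsGLB (Set.range (c i)) (cm i))
    (hap : ∀ i j, IsLUB (Set.range fun n => |a i j n|) (ap i j))
    (hbp : ∀ i j l, IsLUB (Set.range fun n => |b i j l n|) (bp i j l))
    (hIp : ∀ i, IsLUB (Set.range fun n => |I i n|) (Ip i))
    -- (H3)
    (H3a : ∀ i, ∀ n : ℤ, 0 < 1 - c i n)
    (H3b : ∀ i, 0 < cm i)
    -- (H4): max_i (ηᵢ/ĉᵢ⁻) + L ≤ r₀ and max_i η̄ᵢ < min_i ĉᵢ⁻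
    (H4a : ∀ i i' : Fin m,
      (∑ j, (ap i j * (|F j 0| + ep j * r₀) +
        (|G j 0| + ve j * r₀) * ∑ l, bp i j l * (|G l 0| + ve l * r₀))) / cm i
        + Ip i' / cm i' ≤ r₀)
    (H4b : ∀ i i' : Fin m,
      (∑ j, ap i j * ep j) +
        (∑ j, ∑ l, bp i j l * (N l * ve j + N j * ve l)) < cm i') :
    ∃! x : ℤ → Fin m → ℝ,
      (∀ n : ℤ, ∀ i : Fin m,
        x (n + 1) i - x n i =
          -(c i n) * x n i +
          (∑ j, a i j n * F j (x (n - γ i j n) j)) +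
          (∑ j, ∑ l, b i j l n * G j (x (n - ω i j l n) j) * G l (x (n - v i j l n) l)) +
          I i n) ∧
      (∀ i, APseq fun n => x n i) ∧
      (∀ n : ℤ, ∀ i : Fin m, |x n i| ≤ r₀) := by
  classical
  have hne : Nonempty (Fin m) := ⟨⟨0, hm⟩⟩
  have huniv : (Finset.univ : Finset (Fin m)).Nonempty := Finset.univ_nonempty
  -- basic bounds from GLB/LUB
  have hcmle : ∀ i (n : ℤ), cm i ≤ c i n := fun i n => (hcm i).1 ⟨n, rfl⟩
  have haple : ∀ i j (n : ℤ), |a i j n| ≤ ap i j := fun i j n => (hap i j).1 ⟨n, rfl⟩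
  have hbple : ∀ i j l (n : ℤ), |b i j l n| ≤ bp i j l := fun i j l n => (hbp i j l).1 ⟨n, rfl⟩
  have hIple : ∀ i (n : ℤ), |I i n| ≤ Ip i := fun i n => (hIp i).1 ⟨n, rfl⟩
  have hapnn : ∀ i j, 0 ≤ ap i j := fun i j => le_trans (abs_nonneg _) (haple i j 0)
  have hbpnn : ∀ i j l, 0 ≤ bp i j l := fun i j l => le_trans (abs_nonneg _) (hbple i j l 0)
  have hIpnn : ∀ i, 0 ≤ Ip i := fun i => le_trans (abs_nonneg _) (hIple i 0)
  have hcm1 : ∀ i, cm i < 1 := fun i => lt_of_le_of_lt (hcmle i 0) (by have := H3a i 0; linarith)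
  have hfac0 : ∀ i (n : ℤ), 0 ≤ 1 - c i n := fun i n => le_of_lt (H3a i n)
  have hfacle : ∀ i (n : ℤ), 1 - c i n ≤ 1 - cm i := fun i n => by have := hcmle i n; linarith
  have hr0 : ∀ i, (0:ℝ) ≤ 1 - cm i := fun i => by have := hcm1 i; linarith
  have hr1 : ∀ i, 1 - cm i < 1 := fun i => by have := H3b i; linarith
  -- abbreviations
  set Mf : Fin m → ℝ := fun j => |F j 0| + ep j * r₀ with hMf
  set Ng : Fin m → ℝ := fun j => |G j 0| + ve j * r₀ with hNg
  set eta : Fin m → ℝ := fun i => ∑ j, (ap i j * Mf j + Ng j * ∑ l, bp i j l * Ng l) with heta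
  set etb : Fin m → ℝ := fun i =>
    (∑ j, ap i j * ep j) + ∑ j, ∑ l, bp i j l * (N l * ve j + N j * ve l) with hetb
  have hMfnn : ∀ j, 0 ≤ Mf j := fun j => by
    have := hep j; have := abs_nonneg (F j 0); positivity
  have hNgnn : ∀ j, 0 ≤ Ng j := fun j => by
    have := hve j; have := abs_nonneg (G j 0); positivity
  have hFb : ∀ j (u : ℝ), |u| ≤ r₀ → |F j u| ≤ Mf j := by
    intro j u hu
    have h1 := H1f j u 0
    have h2 : |F j u| - |F j 0| ≤ |F j u - F j 0| := abs_sub_abs_le_abs_sub _ _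
    have h3 : ep j * |u - 0| ≤ ep j * r₀ := by
      rw [sub_zero]; exact mul_le_mul_of_nonneg_left hu (le_of_lt (hep j))
    simp only [hMf]; linarith
  have hGb : ∀ j (u : ℝ), |u| ≤ r₀ → |G j u| ≤ Ng j := by
    intro j u hu
    have h1 := H1g j u 0
    have h2 : |G j u| - |G j 0| ≤ |G j u - G j 0| := abs_sub_abs_le_abs_sub _ _
    have h3 : ve j * |u - 0| ≤ ve j * r₀ := by
      rw [sub_zero]; exact mul_le_mul_of_nonneg_left hu (le_of_lt (hve j))
    simp only [hNg]; linarith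
  have hetann : ∀ i, 0 ≤ eta i := by
    intro i
    apply Finset.sum_nonneg
    intro j _
    have h1 : 0 ≤ ap i j * Mf j := mul_nonneg (hapnn i j) (hMfnn j)
    have h2 : 0 ≤ Ng j * ∑ l, bp i j l * Ng l := by
      apply mul_nonneg (hNgnn j)
      exact Finset.sum_nonneg fun l _ => mul_nonneg (hbpnn i j l) (hNgnn l)
    linarith
  have hetbnn : ∀ i, 0 ≤ etb i := by
    intro i
    have h1 : 0 ≤ ∑ j, ap i j * ep j :=
      Finset.sum_nonneg fun j _ => mul_nonneg (hapnn i j) (le_of_lt (hep j))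
    have h2 : 0 ≤ ∑ j : Fin m, ∑ l, bp i j l * (N l * ve j + N j * ve l) := by
      apply Finset.sum_nonneg; intro j _
      apply Finset.sum_nonneg; intro l _
      have := hN l; have := hN j; have := hve l; have := hve j
      have := hbpnn i j l; positivity
    simp only [hetb]; linarith
  -- the forcing term
  set gf : (ℤ → Fin m → ℝ) → Fin m → ℤ → ℝ := fun x i s =>
    (∑ j, a i j s * F j (x (s - γ i j s) j)) +
    (∑ j, ∑ l, b i j l s * G j (x (s - ω i j l s) j) * G l (x (s - v i j l s) l)) + I i s
    with hgf
  -- bound on the forcing term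
  have hgfb : ∀ x : ℤ → Fin m → ℝ, (∀ (n : ℤ) i, |x n i| ≤ r₀) →
      ∀ i (s : ℤ), |gf x i s| ≤ eta i + Ip i := by
    intro x hx i s
    simp only [hgf]
    have hA : |∑ j, a i j s * F j (x (s - γ i j s) j)| ≤ ∑ j, ap i j * Mf j := by
      refine le_trans (Finset.abs_sum_le_sum_abs _ _) (Finset.sum_le_sum ?_)
      intro j _
      rw [abs_mul]
      exact mul_le_mul (haple i j s) (hFb j _ (hx _ j)) (abs_nonneg _) (hapnn i j)
    have hB : |∑ j, ∑ l, b i j l s * G j (x (s - ω i j l s) j) * G l (x (s - v i j l s) l)|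
        ≤ ∑ j, Ng j * ∑ l, bp i j l * Ng l := by
      refine le_trans (Finset.abs_sum_le_sum_abs _ _) (Finset.sum_le_sum ?_)
      intro j _
      refine le_trans (Finset.abs_sum_le_sum_abs _ _) ?_
      rw [Finset.mul_sum]
      refine Finset.sum_le_sum ?_
      intro l _
      rw [abs_mul, abs_mul]
      calc |b i j l s| * |G j (x (s - ω i j l s) j)| * |G l (x (s - v i j l s) l)|
          ≤ bp i j l * Ng j * Ng l := by
            refine mul_le_mul (mul_le_mul (hbple i j l s) (hGb j _ (hx _ j))
              (abs_nonneg _) (hbpnn i j l)) (hGb l _ (hx _ l)) (abs_nonneg _) ?_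
            exact mul_nonneg (hbpnn i j l) (hNgnn j)
        _ = Ng j * (bp i j l * Ng l) := by ring
    have hIs := hIple i s
    have hsplit : eta i = (∑ j, ap i j * Mf j) + ∑ j, Ng j * ∑ l, bp i j l * Ng l := by
      simp only [heta]; rw [← Finset.sum_add_distrib]
    calc |∑ j, a i j s * F j (x (s - γ i j s) j) +
          (∑ j, ∑ l, b i j l s * G j (x (s - ω i j l s) j) * G l (x (s - v i j l s) l)) + I i s|
        ≤ |∑ j, a i j s * F j (x (s - γ i j s) j)| +
          |∑ j, ∑ l, b i j l s * G j (x (s - ω i j l s) j) * G l (x (s - v i j l s) l)| +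
          |I i s| := abs_add_three _ _ _
      _ ≤ eta i + Ip i := by rw [hsplit]; linarith
  -- Lipschitz property of the forcing term
  have hgfl : ∀ x y : ℤ → Fin m → ℝ, ∀ d : ℝ, 0 ≤ d →
      (∀ (n : ℤ) i, |x n i - y n i| ≤ d) →
      (∀ (n : ℤ) i, |x n i| ≤ r₀) → (∀ (n : ℤ) i, |y n i| ≤ r₀) →
      ∀ i (s : ℤ), |gf x i s - gf y i s| ≤ etb i * d := by
    intro x y d hd hxy hx hy i s
    simp only [hgf]
    have hA : |(∑ j, a i j s * F j (x (s - γ i j s) j)) -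
        ∑ j, a i j s * F j (y (s - γ i j s) j)| ≤ (∑ j, ap i j * ep j) * d := by
      rw [← Finset.sum_sub_distrib, Finset.sum_mul]
      refine le_trans (Finset.abs_sum_le_sum_abs _ _) (Finset.sum_le_sum ?_)
      intro j _
      have h1 : a i j s * F j (x (s - γ i j s) j) - a i j s * F j (y (s - γ i j s) j)
          = a i j s * (F j (x (s - γ i j s) j) - F j (y (s - γ i j s) j)) := by ring
      rw [h1, abs_mul]
      have h2 : |F j (x (s - γ i j s) j) - F j (y (s - γ i j s) j)| ≤ ep j * d :=
        le_trans (H1f j _ _) (mul_le_mul_of_nonneg_left (hxy _ j) (le_of_lt (hep j)))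
      calc |a i j s| * |F j (x (s - γ i j s) j) - F j (y (s - γ i j s) j)|
          ≤ ap i j * (ep j * d) :=
            mul_le_mul (haple i j s) h2 (abs_nonneg _) (hapnn i j)
        _ = ap i j * ep j * d := by ring
    have hB : |(∑ j, ∑ l, b i j l s * G j (x (s - ω i j l s) j) * G l (x (s - v i j l s) l)) -
        ∑ j, ∑ l, b i j l s * G j (y (s - ω i j l s) j) * G l (y (s - v i j l s) l)|
        ≤ (∑ j, ∑ l, bp i j l * (N l * ve j + N j * ve l)) * d := by
      rw [← Finset.sum_sub_distrib, Finset.sum_mul]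
      refine le_trans (Finset.abs_sum_le_sum_abs _ _) (Finset.sum_le_sum ?_)
      intro j _
      rw [← Finset.sum_sub_distrib, Finset.sum_mul]
      refine le_trans (Finset.abs_sum_le_sum_abs _ _) (Finset.sum_le_sum ?_)
      intro l _
      have h1 : b i j l s * G j (x (s - ω i j l s) j) * G l (x (s - v i j l s) l) -
          b i j l s * G j (y (s - ω i j l s) j) * G l (y (s - v i j l s) l)
          = b i j l s * ((G j (x (s - ω i j l s) j) - G j (y (s - ω i j l s) j)) *
              G l (x (s - v i j l s) l) +
            G j (y (s - ω i j l s) j) *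
              (G l (x (s - v i j l s) l) - G l (y (s - v i j l s) l))) := by ring
      rw [h1, abs_mul]
      have hGj : |G j (x (s - ω i j l s) j) - G j (y (s - ω i j l s) j)| ≤ ve j * d :=
        le_trans (H1g j _ _) (mul_le_mul_of_nonneg_left (hxy _ j) (le_of_lt (hve j)))
      have hGl : |G l (x (s - v i j l s) l) - G l (y (s - v i j l s) l)| ≤ ve l * d :=
        le_trans (H1g l _ _) (mul_le_mul_of_nonneg_left (hxy _ l) (le_of_lt (hve l)))
      have h2 : |(G j (x (s - ω i j l s) j) - G j (y (s - ω i j l s) j)) *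
              G l (x (s - v i j l s) l) +
            G j (y (s - ω i j l s) j) *
              (G l (x (s - v i j l s) l) - G l (y (s - v i j l s) l))|
          ≤ ve j * d * N l + N j * (ve l * d) := by
        refine le_trans (abs_add_le _ _) ?_
        rw [abs_mul, abs_mul]
        refine add_le_add (mul_le_mul hGj (H2 l _) (abs_nonneg _)
          (mul_nonneg (le_of_lt (hve j)) hd)) (mul_le_mul (H2 j _) hGl (abs_nonneg _)
          (le_of_lt (hN j)))
      calc |b i j l s| * |(G j (x (s - ω i j l s) j) - G j (y (s - ω i j l s) j)) *
              G l (x (s - v i j l s) l) +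
            G j (y (s - ω i j l s) j) *
              (G l (x (s - v i j l s) l) - G l (y (s - v i j l s) l))|
          ≤ bp i j l * (ve j * d * N l + N j * (ve l * d)) := by
            refine mul_le_mul (hbple i j l s) h2 (abs_nonneg _) (hbpnn i j l)
        _ = bp i j l * (N l * ve j + N j * ve l) * d := by ring
    have key : (∑ j, a i j s * F j (x (s - γ i j s) j)) +
          (∑ j, ∑ l, b i j l s * G j (x (s - ω i j l s) j) * G l (x (s - v i j l s) l)) + I i s
        - ((∑ j, a i j s * F j (y (s - γ i j s) j)) +
          (∑ j, ∑ l, b i j l s * G j (y (s - ω i j l s) j) * G l (y (s - v i j l s) l)) + I i s)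
        = ((∑ j, a i j s * F j (x (s - γ i j s) j)) -
            ∑ j, a i j s * F j (y (s - γ i j s) j)) +
          ((∑ j, ∑ l, b i j l s * G j (x (s - ω i j l s) j) * G l (x (s - v i j l s) l)) -
            ∑ j, ∑ l, b i j l s * G j (y (s - ω i j l s) j) * G l (y (s - v i j l s) l)) := by
      ring
    rw [key]
    refine le_trans (abs_add_le _ _) ?_
    simp only [hetb]
    rw [add_mul]
    exact add_le_add hA hB
  -- product kernel
  set P : Fin m → ℤ → ℕ → ℝ := fun i n k =>
    ∏ j ∈ Finset.range k, (1 - c i (n - 1 - (j : ℤ))) with hPdef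
  have hPnn : ∀ i (n : ℤ) k, 0 ≤ P i n k := by
    intro i n k
    exact Finset.prod_nonneg fun j _ => hfac0 i _
  have hPle : ∀ i (n : ℤ) k, P i n k ≤ (1 - cm i) ^ k := by
    intro i n k
    simp only [hPdef]
    calc ∏ j ∈ Finset.range k, (1 - c i (n - 1 - (j:ℤ)))
        ≤ ∏ _j ∈ Finset.range k, (1 - cm i) :=
          Finset.prod_le_prod (fun j _ => hfac0 i _) (fun j _ => hfacle i _)
      _ = (1 - cm i) ^ k := by simp
  have hPabs : ∀ i (n : ℤ) k, |P i n k| ≤ (1 - cm i) ^ k := by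
    intro i n k; rw [abs_of_nonneg (hPnn i n k)]; exact hPle i n k
  have hPle1 : ∀ i (n : ℤ) k, P i n k ≤ 1 := by
    intro i n k
    exact le_trans (hPle i n k) (pow_le_one₀ (hr0 i) (le_of_lt (hr1 i)))
  -- the operator
  set T : (ℤ → Fin m → ℝ) → ℤ → Fin m → ℝ := fun x n i =>
    ∑' k : ℕ, P i n k * gf x i (n - 1 - (k : ℤ)) with hT
  -- summability
  have hterm : ∀ x : ℤ → Fin m → ℝ, (∀ (n : ℤ) i, |x n i| ≤ r₀) →
      ∀ i (n : ℤ) (k : ℕ), |P i n k * gf x i (n - 1 - (k : ℤ))| ≤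
        (eta i + Ip i) * (1 - cm i) ^ k := by
    intro x hx i n k
    rw [abs_mul, mul_comm]
    exact mul_le_mul (hgfb x hx i _) (hPabs i n k) (abs_nonneg _)
      (le_trans (abs_nonneg _) (hgfb x hx i 0))
  have hTsum : ∀ x : ℤ → Fin m → ℝ, (∀ (n : ℤ) i, |x n i| ≤ r₀) →
      ∀ i (n : ℤ), Summable (fun k : ℕ => P i n k * gf x i (n - 1 - (k : ℤ))) := by
    intro x hx i n
    exact summable_of_abs_le_geom (hr0 i) (hr1 i) (hterm x hx i n)
  -- T maps the ball into itself
  have hTb : ∀ x : ℤ → Fin m → ℝ, (∀ (n : ℤ) i, |x n i| ≤ r₀) →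
      ∀ (n : ℤ) i, |T x n i| ≤ r₀ := by
    intro x hx n i
    have hgsum : Summable fun k : ℕ => (eta i + Ip i) * (1 - cm i) ^ k :=
      (summable_geometric_of_lt_one (hr0 i) (hr1 i)).mul_left _
    simp only [hT]
    refine le_trans (abs_tsum_le' hgsum (hterm x hx i n)) ?_
    rw [tsum_geom_mul (hr0 i) (hr1 i)]
    have h1 : 1 - (1 - cm i) = cm i := by ring
    rw [h1]
    have hH4 : eta i / cm i + Ip i / cm i ≤ r₀ := by
      simpa only [heta, hMf, hNg] using H4a i i
    rw [← add_div] at hH4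
    exact hH4
  -- the recurrence for T
  have hTrec : ∀ x : ℤ → Fin m → ℝ, (∀ (n : ℤ) i, |x n i| ≤ r₀) →
      ∀ (n : ℤ) i, T x (n + 1) i = (1 - c i n) * T x n i + gf x i n := by
    intro x hx n i
    have hsum1 := hTsum x hx i (n + 1)
    simp only [hT]
    rw [Summable.tsum_eq_zero_add hsum1]
    have h0 : P i (n + 1) 0 * gf x i (n + 1 - 1 - ((0 : ℕ) : ℤ)) = gf x i n := by
      simp only [hPdef, Finset.range_zero, Finset.prod_empty, one_mul, Nat.cast_zero]
      norm_num
    have hshift : ∀ k : ℕ, P i (n + 1) (k + 1) * gf x i (n + 1 - 1 - ((k + 1 : ℕ) : ℤ))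
        = (1 - c i n) * (P i n k * gf x i (n - 1 - (k : ℤ))) := by
      intro k
      have hP1 : P i (n + 1) (k + 1) = (1 - c i n) * P i n k := by
        simp only [hPdef]
        rw [Finset.prod_range_succ', mul_comm]
        congr 1
        · norm_num
        · refine Finset.prod_congr rfl fun j _ => ?_
          congr 1
          push_cast
          ring
      have harg : n + 1 - 1 - ((k + 1 : ℕ) : ℤ) = n - 1 - (k : ℤ) := by push_cast; ring
      rw [hP1, harg]
      ring
    have hrest : (∑' k : ℕ, P i (n + 1) (k + 1) * gf x i (n + 1 - 1 - ((k + 1 : ℕ) : ℤ)))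
        = (1 - c i n) * ∑' k : ℕ, P i n k * gf x i (n - 1 - (k : ℤ)) := by
      rw [tsum_congr hshift, tsum_mul_left]
    rw [h0, hrest, add_comm]
  -- contraction
  set ρ : ℝ := Finset.univ.sup' huniv (fun i => etb i / cm i) with hρ
  have hρ0 : 0 ≤ ρ := by
    obtain ⟨i⟩ := hne
    rw [hρ]
    exact le_trans (div_nonneg (hetbnn i) (le_of_lt (H3b i)))
      (Finset.le_sup' (fun i => etb i / cm i) (Finset.mem_univ i))
  have hρ1 : ρ < 1 := by
    rw [hρ, Finset.sup'_lt_iff]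
    intro i _
    rw [div_lt_one (H3b i)]
    have := H4b i i
    simp only [hetb]; linarith
  have hTlip : ∀ x y : ℤ → Fin m → ℝ,
      (∀ (n : ℤ) i, |x n i| ≤ r₀) → (∀ (n : ℤ) i, |y n i| ≤ r₀) →
      ∀ d : ℝ, 0 ≤ d → (∀ (n : ℤ) i, |x n i - y n i| ≤ d) →
      ∀ (n : ℤ) i, |T x n i - T y n i| ≤ ρ * d := by
    intro x y hx hy d hd hxy n i
    simp only [hT]
    rw [← Summable.tsum_sub (hTsum x hx i n) (hTsum y hy i n)]
    have hgsum : Summable fun k : ℕ => etb i * d * (1 - cm i) ^ k :=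
      (summable_geometric_of_lt_one (hr0 i) (hr1 i)).mul_left _
    have hterm2 : ∀ k : ℕ, |P i n k * gf x i (n - 1 - (k : ℤ)) -
        P i n k * gf y i (n - 1 - (k : ℤ))| ≤ etb i * d * (1 - cm i) ^ k := by
      intro k
      have h1 : P i n k * gf x i (n - 1 - (k : ℤ)) - P i n k * gf y i (n - 1 - (k : ℤ))
          = P i n k * (gf x i (n - 1 - (k : ℤ)) - gf y i (n - 1 - (k : ℤ))) := by ring
      rw [h1, abs_mul, mul_comm (etb i * d)]
      exact mul_le_mul (hPabs i n k) (hgfl x y d hd hxy hx hy i _) (abs_nonneg _)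
        (pow_nonneg (hr0 i) k)
    refine le_trans (abs_tsum_le' hgsum hterm2) ?_
    rw [tsum_geom_mul (hr0 i) (hr1 i)]
    have h1 : 1 - (1 - cm i) = cm i := by ring
    rw [h1]
    have h2 : etb i * d / cm i = etb i / cm i * d := by ring
    rw [h2]
    have h3 : etb i / cm i ≤ ρ := by
      rw [hρ]
      exact Finset.le_sup' (fun i => etb i / cm i) (Finset.mem_univ i)
    exact mul_le_mul_of_nonneg_right h3 hd
  -- T preserves almost periodicity
  have hfle1 : ∀ i (u : ℤ), 1 - c i u ≤ 1 := by
    intro i u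
    have h1 := hcmle i u; have h2 := H3b i; linarith
  have hTap : ∀ x : ℤ → Fin m → ℝ, (∀ (n : ℤ) i, |x n i| ≤ r₀) →
      (∀ i, APseq fun n => x n i) → ∀ i, APseq fun n => T x n i := by
    intro x hx hxap i₀
    set cmin : ℝ := Finset.univ.inf' huniv cm with hcmin
    have hcmin0 : 0 < cmin := by
      rw [hcmin, Finset.lt_inf'_iff]
      exact fun i _ => H3b i
    have hcminle : ∀ i, cmin ≤ cm i := fun i => Finset.inf'_le _ (Finset.mem_univ i)
    set rmax : ℝ := 1 - cmin with hrmax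
    have hrmax0 : 0 ≤ rmax := by
      obtain ⟨i⟩ := hne
      have h1 := hcminle i; have h2 := hcm1 i; simp only [hrmax]; linarith
    have hrmax1 : rmax < 1 := by simp only [hrmax]; linarith
    have hrle : ∀ i, 1 - cm i ≤ rmax := fun i => by
      have := hcminle i; simp only [hrmax]; linarith
    have hPrm : ∀ i (u : ℤ) k, |P i u k| ≤ rmax ^ k := fun i u k =>
      le_trans (hPabs i u k) (pow_le_pow_left₀ (hr0 i) (hrle i) k)
    set MG : ℝ := ∑ i, (eta i + Ip i) with hMGdef
    have hMGnn : 0 ≤ MG :=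
      Finset.sum_nonneg fun i _ => add_nonneg (hetann i) (hIpnn i)
    have hMGb : ∀ i (s : ℤ), |gf x i s| ≤ MG := fun i s =>
      le_trans (hgfb x hx i s)
        (Finset.single_le_sum (f := fun i => eta i + Ip i)
          (fun i _ => add_nonneg (hetann i) (hIpnn i)) (Finset.mem_univ i))
    set C : ℝ := 1 + (∑ i, ∑ j, (Mf j + ap i j * ep j)) +
      ∑ i, ∑ j, ∑ l, (N j * N l + bp i j l * (ve j * N l + N j * ve l)) with hCdef
    have hsum1nn : ∀ i : Fin m, (0:ℝ) ≤ ∑ j, (Mf j + ap i j * ep j) := fun i =>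
      Finset.sum_nonneg fun j _ =>
        add_nonneg (hMfnn j) (mul_nonneg (hapnn i j) (le_of_lt (hep j)))
    have hsum2nn : ∀ i : Fin m,
        (0:ℝ) ≤ ∑ j, ∑ l, (N j * N l + bp i j l * (ve j * N l + N j * ve l)) := fun i =>
      Finset.sum_nonneg fun j _ => Finset.sum_nonneg fun l _ => by
        have := hN j; have := hN l; have := hve j; have := hve l; have := hbpnn i j l
        positivity
    have hC0 : 0 < C := by
      have h1 : (0:ℝ) ≤ ∑ i, ∑ j, (Mf j + ap i j * ep j) :=
        Finset.sum_nonneg fun i _ => hsum1nn i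
      have h2 : (0:ℝ) ≤ ∑ i, ∑ j, ∑ l, (N j * N l + bp i j l * (ve j * N l + N j * ve l)) :=
        Finset.sum_nonneg fun i _ => hsum2nn i
      simp only [hCdef]; linarith
    have hCi : ∀ i : Fin m, (∑ j, (Mf j + ap i j * ep j)) +
        (∑ j, ∑ l, (N j * N l + bp i j l * (ve j * N l + N j * ve l))) + 1 ≤ C := by
      intro i
      have h1 : (∑ j, (Mf j + ap i j * ep j)) ≤ ∑ i, ∑ j, (Mf j + ap i j * ep j) :=
        Finset.single_le_sum (f := fun i => ∑ j, (Mf j + ap i j * ep j))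
          (fun i _ => hsum1nn i) (Finset.mem_univ i)
      have h2 : (∑ j, ∑ l, (N j * N l + bp i j l * (ve j * N l + N j * ve l))) ≤
          ∑ i, ∑ j, ∑ l, (N j * N l + bp i j l * (ve j * N l + N j * ve l)) :=
        Finset.single_le_sum
          (f := fun i => ∑ j, ∑ l, (N j * N l + bp i j l * (ve j * N l + N j * ve l)))
          (fun i _ => hsum2nn i) (Finset.mem_univ i)
      simp only [hCdef]; linarith
    -- gf almost-period estimate
    have hgfap : ∀ (τ : ℤ) (δ : ℝ), 0 ≤ δ →
        (∀ i j (u : ℤ), |a i j (u + τ) - a i j u| ≤ δ) →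
        (∀ i j l (u : ℤ), |b i j l (u + τ) - b i j l u| ≤ δ) →
        (∀ i (u : ℤ), |I i (u + τ) - I i u| ≤ δ) →
        (∀ i j (u : ℤ), γ i j (u + τ) = γ i j u) →
        (∀ i j l (u : ℤ), ω i j l (u + τ) = ω i j l u) →
        (∀ i j l (u : ℤ), v i j l (u + τ) = v i j l u) →
        (∀ (u : ℤ) i, |x (u + τ) i - x u i| ≤ δ) →
        ∀ i (s : ℤ), |gf x i (s + τ) - gf x i s| ≤ C * δ := by
      intro τ δ hδ hQa hQb hQI hQγ hQω hQv hQx i s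
      simp only [hgf]
      have hA : |(∑ j, a i j (s + τ) * F j (x (s + τ - γ i j (s + τ)) j)) -
          ∑ j, a i j s * F j (x (s - γ i j s) j)| ≤
          (∑ j, (Mf j + ap i j * ep j)) * δ := by
        rw [← Finset.sum_sub_distrib, Finset.sum_mul]
        refine le_trans (Finset.abs_sum_le_sum_abs _ _) (Finset.sum_le_sum ?_)
        intro j _
        rw [hQγ i j s]
        have harg : s + τ - (γ i j s : ℤ) = (s - γ i j s) + τ := by ring
        rw [harg]
        have h1 : a i j (s + τ) * F j (x ((s - γ i j s) + τ) j) -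
            a i j s * F j (x (s - γ i j s) j)
            = (a i j (s + τ) - a i j s) * F j (x ((s - γ i j s) + τ) j) +
              a i j s * (F j (x ((s - γ i j s) + τ) j) - F j (x (s - γ i j s) j)) := by ring
        rw [h1]
        refine le_trans (abs_add_le _ _) ?_
        rw [abs_mul, abs_mul]
        have h2 : |F j (x ((s - γ i j s) + τ) j)| ≤ Mf j := hFb j _ (hx _ j)
        have h3 : |F j (x ((s - γ i j s) + τ) j) - F j (x (s - γ i j s) j)| ≤ ep j * δ :=
          le_trans (H1f j _ _) (mul_le_mul_of_nonneg_left (hQx _ j) (le_of_lt (hep j)))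
        calc |a i j (s + τ) - a i j s| * |F j (x ((s - γ i j s) + τ) j)| +
              |a i j s| * |F j (x ((s - γ i j s) + τ) j) - F j (x (s - γ i j s) j)|
            ≤ δ * Mf j + ap i j * (ep j * δ) :=
              add_le_add (mul_le_mul (hQa i j s) h2 (abs_nonneg _) hδ)
                (mul_le_mul (haple i j s) h3 (abs_nonneg _) (hapnn i j))
          _ = (Mf j + ap i j * ep j) * δ := by ring
      have hB : |(∑ j, ∑ l, b i j l (s + τ) * G j (x (s + τ - ω i j l (s + τ)) j) *
            G l (x (s + τ - v i j l (s + τ)) l)) -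
          ∑ j, ∑ l, b i j l s * G j (x (s - ω i j l s) j) * G l (x (s - v i j l s) l)| ≤
          (∑ j, ∑ l, (N j * N l + bp i j l * (ve j * N l + N j * ve l))) * δ := by
        rw [← Finset.sum_sub_distrib, Finset.sum_mul]
        refine le_trans (Finset.abs_sum_le_sum_abs _ _) (Finset.sum_le_sum ?_)
        intro j _
        rw [← Finset.sum_sub_distrib, Finset.sum_mul]
        refine le_trans (Finset.abs_sum_le_sum_abs _ _) (Finset.sum_le_sum ?_)
        intro l _
        rw [hQω i j l s, hQv i j l s]
        have harg1 : s + τ - (ω i j l s : ℤ) = (s - ω i j l s) + τ := by ring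
        have harg2 : s + τ - (v i j l s : ℤ) = (s - v i j l s) + τ := by ring
        rw [harg1, harg2]
        have h1 : b i j l (s + τ) * G j (x ((s - ω i j l s) + τ) j) *
              G l (x ((s - v i j l s) + τ) l) -
            b i j l s * G j (x (s - ω i j l s) j) * G l (x (s - v i j l s) l)
            = (b i j l (s + τ) - b i j l s) * G j (x ((s - ω i j l s) + τ) j) *
                G l (x ((s - v i j l s) + τ) l) +
              b i j l s * ((G j (x ((s - ω i j l s) + τ) j) - G j (x (s - ω i j l s) j)) *
                  G l (x ((s - v i j l s) + τ) l) +
                G j (x (s - ω i j l s) j) *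
                  (G l (x ((s - v i j l s) + τ) l) - G l (x (s - v i j l s) l))) := by ring
        rw [h1]
        refine le_trans (abs_add_le _ _) ?_
        rw [abs_mul, abs_mul, abs_mul]
        have hGj : |G j (x ((s - ω i j l s) + τ) j) - G j (x (s - ω i j l s) j)| ≤ ve j * δ :=
          le_trans (H1g j _ _) (mul_le_mul_of_nonneg_left (hQx _ j) (le_of_lt (hve j)))
        have hGl : |G l (x ((s - v i j l s) + τ) l) - G l (x (s - v i j l s) l)| ≤ ve l * δ :=
          le_trans (H1g l _ _) (mul_le_mul_of_nonneg_left (hQx _ l) (le_of_lt (hve l)))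
        have h2 : |(G j (x ((s - ω i j l s) + τ) j) - G j (x (s - ω i j l s) j)) *
              G l (x ((s - v i j l s) + τ) l) +
            G j (x (s - ω i j l s) j) *
              (G l (x ((s - v i j l s) + τ) l) - G l (x (s - v i j l s) l))|
            ≤ ve j * δ * N l + N j * (ve l * δ) := by
          refine le_trans (abs_add_le _ _) ?_
          rw [abs_mul, abs_mul]
          exact add_le_add (mul_le_mul hGj (H2 l _) (abs_nonneg _)
            (mul_nonneg (le_of_lt (hve j)) hδ))
            (mul_le_mul (H2 j _) hGl (abs_nonneg _) (le_of_lt (hN j)))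
        calc |b i j l (s + τ) - b i j l s| * |G j (x ((s - ω i j l s) + τ) j)| *
              |G l (x ((s - v i j l s) + τ) l)| +
              |b i j l s| * |(G j (x ((s - ω i j l s) + τ) j) - G j (x (s - ω i j l s) j)) *
                G l (x ((s - v i j l s) + τ) l) +
              G j (x (s - ω i j l s) j) *
                (G l (x ((s - v i j l s) + τ) l) - G l (x (s - v i j l s) l))|
            ≤ δ * N j * N l + bp i j l * (ve j * δ * N l + N j * (ve l * δ)) := by
              refine add_le_add ?_ (mul_le_mul (hbple i j l s) h2 (abs_nonneg _) (hbpnn i j l))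
              refine mul_le_mul (mul_le_mul (hQb i j l s) (H2 j _) (abs_nonneg _) hδ)
                (H2 l _) (abs_nonneg _) ?_
              exact mul_nonneg hδ (le_of_lt (hN j))
          _ = (N j * N l + bp i j l * (ve j * N l + N j * ve l)) * δ := by ring
      have hIτ : |I i (s + τ) - I i s| ≤ δ := hQI i s
      have key : (∑ j, a i j (s + τ) * F j (x (s + τ - γ i j (s + τ)) j)) +
            (∑ j, ∑ l, b i j l (s + τ) * G j (x (s + τ - ω i j l (s + τ)) j) *
              G l (x (s + τ - v i j l (s + τ)) l)) + I i (s + τ)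
          - ((∑ j, a i j s * F j (x (s - γ i j s) j)) +
            (∑ j, ∑ l, b i j l s * G j (x (s - ω i j l s) j) * G l (x (s - v i j l s) l)) + I i s)
          = ((∑ j, a i j (s + τ) * F j (x (s + τ - γ i j (s + τ)) j)) -
              ∑ j, a i j s * F j (x (s - γ i j s) j)) +
            ((∑ j, ∑ l, b i j l (s + τ) * G j (x (s + τ - ω i j l (s + τ)) j) *
                G l (x (s + τ - v i j l (s + τ)) l)) -
              ∑ j, ∑ l, b i j l s * G j (x (s - ω i j l s) j) * G l (x (s - v i j l s) l)) +
            (I i (s + τ) - I i s) := by ring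
      rw [key]
      refine le_trans (abs_add_three _ _ _) ?_
      have hfin := hCi i
      have h5 : (∑ j, (Mf j + ap i j * ep j)) * δ +
          (∑ j, ∑ l, (N j * N l + bp i j l * (ve j * N l + N j * ve l))) * δ + δ ≤ C * δ := by
        have := mul_le_mul_of_nonneg_right hfin hδ
        calc (∑ j, (Mf j + ap i j * ep j)) * δ +
            (∑ j, ∑ l, (N j * N l + bp i j l * (ve j * N l + N j * ve l))) * δ + δ
            = ((∑ j, (Mf j + ap i j * ep j)) +
              (∑ j, ∑ l, (N j * N l + bp i j l * (ve j * N l + N j * ve l))) + 1) * δ := by ring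
          _ ≤ C * δ := mul_le_mul_of_nonneg_right hfin hδ
      exact le_trans (by linarith [hA, hB, hIτ] : _ ≤ (∑ j, (Mf j + ap i j * ep j)) * δ +
        (∑ j, ∑ l, (N j * N l + bp i j l * (ve j * N l + N j * ve l))) * δ + δ) h5
    -- now prove almost periodicity of T x · i₀
    intro ε hε
    -- choose truncation K
    obtain ⟨K, hK⟩ : ∃ K : ℕ, rmax ^ (K + 1) * MG / cmin ≤ ε / 4 := by
      have hpos : 0 < ε / 4 * cmin / (MG + 1) := by positivity
      have h := tendsto_pow_atTop_nhds_zero_of_lt_one hrmax0 hrmax1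
      obtain ⟨K, hK⟩ := (h.eventually (gt_mem_nhds hpos)).exists
      refine ⟨K, ?_⟩
      have h1 : rmax ^ (K + 1) ≤ rmax ^ K := by
        rw [pow_succ]
        nlinarith [pow_nonneg hrmax0 K]
      have hr2 : rmax ^ (K + 1) ≤ ε / 4 * cmin / (MG + 1) := le_trans h1 (le_of_lt hK)
      rw [div_le_iff₀ hcmin0]
      calc rmax ^ (K + 1) * MG ≤ (ε / 4 * cmin / (MG + 1)) * (MG + 1) :=
            mul_le_mul hr2 (by linarith) hMGnn (le_of_lt hpos)
        _ = ε / 4 * cmin := by field_simp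
    set X : ℝ := (K + 1 : ℕ) * ((K : ℕ) * MG + C) with hXdef
    have hX0 : 0 ≤ X := by
      simp only [hXdef]
      have : (0:ℝ) ≤ (K : ℝ) * MG := mul_nonneg (Nat.cast_nonneg K) hMGnn
      positivity
    set δ : ℝ := min (1/2 : ℝ) (ε / (4 * (X + 1))) with hδdef
    have hδ0 : 0 < δ := by
      apply lt_min (by norm_num)
      positivity
    have hδhalf : δ ≤ 1/2 := min_le_left _ _
    have hδX : X * δ ≤ ε / 4 := by
      have h1 : δ ≤ ε / (4 * (X + 1)) := min_le_right _ _
      have h2 : X * δ ≤ X * (ε / (4 * (X + 1))) := mul_le_mul_of_nonneg_left h1 hX0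
      have h4 : X * (ε / (4 * (X + 1))) ≤ (X + 1) * (ε / (4 * (X + 1))) := by
        have hnn : 0 ≤ ε / (4 * (X + 1)) := by positivity
        nlinarith
      have h5 : (X + 1) * (ε / (4 * (X + 1))) = ε / 4 := by
        field_simp
      linarith
    -- common almost periods of all data and x
    obtain ⟨ℓ, hℓ0, hτfam⟩ := commonAP
      (fun q : Fin 9 × Fin m × Fin m × Fin m =>
        ![c q.2.1, a q.2.1 q.2.2.1, b q.2.1 q.2.2.1 q.2.2.2, I q.2.1,
          (fun n => (γ q.2.1 q.2.2.1 n : ℝ)),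
          (fun n => (ω q.2.1 q.2.2.1 q.2.2.2 n : ℝ)),
          (fun n => (v q.2.1 q.2.2.1 q.2.2.2 n : ℝ)),
          (fun n => x n q.2.1), c q.2.1] q.1)
      (by
        rintro ⟨t, i, j, l⟩
        fin_cases t
        · exact hc i
        · exact ha i j
        · exact hb i j l
        · exact hI i
        · exact hγ i j
        · exact hω i j l
        · exact hv i j l
        · exact hxap i
        · exact hc i) δ hδ0
    refine ⟨ℓ, hℓ0, fun p => ?_⟩
    obtain ⟨τ, hτ1, hτ2, hτ3⟩ := hτfam p
    refine ⟨τ, hτ1, hτ2, fun n => ?_⟩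
    -- extract individual almost-period properties
    have hQc : ∀ i (u : ℤ), |c i (u + τ) - c i u| ≤ δ := fun i u =>
      le_of_lt (hτ3 ((0 : Fin 9), i, i, i) u)
    have hQa : ∀ i j (u : ℤ), |a i j (u + τ) - a i j u| ≤ δ := fun i j u =>
      le_of_lt (hτ3 ((1 : Fin 9), i, j, j) u)
    have hQb : ∀ i j l (u : ℤ), |b i j l (u + τ) - b i j l u| ≤ δ := fun i j l u =>
      le_of_lt (hτ3 ((2 : Fin 9), i, j, l) u)
    have hQI : ∀ i (u : ℤ), |I i (u + τ) - I i u| ≤ δ := fun i u =>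
      le_of_lt (hτ3 ((3 : Fin 9), i, i, i) u)
    have natEq : ∀ (A B : ℕ), |((A:ℝ)) - (B:ℝ)| < 1 → A = B := by
      intro A B hAB
      have h1 : |((A:ℤ):ℝ) - ((B:ℤ):ℝ)| < 1 := by push_cast; exact hAB
      rw [← Int.cast_sub, ← Int.cast_abs] at h1
      have h2 : |(A:ℤ) - (B:ℤ)| < 1 := by exact_mod_cast h1
      have := Int.abs_lt_one_iff.mp h2
      omega
    have hQγ : ∀ i j (u : ℤ), γ i j (u + τ) = γ i j u := by
      intro i j u
      have h := hτ3 ((4 : Fin 9), i, j, j) u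
      exact natEq _ _ (lt_of_lt_of_le h (by linarith))
    have hQω : ∀ i j l (u : ℤ), ω i j l (u + τ) = ω i j l u := by
      intro i j l u
      have h := hτ3 ((5 : Fin 9), i, j, l) u
      exact natEq _ _ (lt_of_lt_of_le h (by linarith))
    have hQv : ∀ i j l (u : ℤ), v i j l (u + τ) = v i j l u := by
      intro i j l u
      have h := hτ3 ((6 : Fin 9), i, j, l) u
      exact natEq _ _ (lt_of_lt_of_le h (by linarith))
    have hQx : ∀ (u : ℤ) i, |x (u + τ) i - x u i| ≤ δ := fun u i =>
      le_of_lt (hτ3 ((7 : Fin 9), i, i, i) u)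
    -- gf estimate
    have hgfδ : ∀ i (s : ℤ), |gf x i (s + τ) - gf x i s| ≤ C * δ :=
      hgfap τ δ (le_of_lt hδ0) hQa hQb hQI hQγ hQω hQv hQx
    -- product estimate
    have hPδ : ∀ (u : ℤ) (k : ℕ), k ≤ K → |P i₀ (u + τ) k - P i₀ u k| ≤ (K : ℝ) * δ := by
      intro u k hk
      have h1 : |P i₀ (u + τ) k - P i₀ u k| ≤
          ∑ j ∈ Finset.range k, |(1 - c i₀ (u + τ - 1 - (j:ℤ))) - (1 - c i₀ (u - 1 - (j:ℤ)))| := by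
        simp only [hPdef]
        refine prodDiff _ _ k ?_ ?_
        · intro j _; exact ⟨hfac0 i₀ _, hfle1 i₀ _⟩
        · intro j _; exact ⟨hfac0 i₀ _, hfle1 i₀ _⟩
      refine le_trans h1 ?_
      have h2 : ∀ j ∈ Finset.range k,
          |(1 - c i₀ (u + τ - 1 - (j:ℤ))) - (1 - c i₀ (u - 1 - (j:ℤ)))| ≤ δ := by
        intro j _
        have harg : u + τ - 1 - (j:ℤ) = (u - 1 - (j:ℤ)) + τ := by ring
        rw [harg]
        have h3 := hQc i₀ (u - 1 - (j:ℤ))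
        calc |(1 - c i₀ ((u - 1 - (j:ℤ)) + τ)) - (1 - c i₀ (u - 1 - (j:ℤ)))|
            = |c i₀ ((u - 1 - (j:ℤ)) + τ) - c i₀ (u - 1 - (j:ℤ))| := by
              rw [abs_sub_comm]; congr 1; ring
          _ ≤ δ := h3
      refine le_trans (Finset.sum_le_sum h2) ?_
      rw [Finset.sum_const, Finset.card_range, nsmul_eq_mul]
      exact mul_le_mul_of_nonneg_right (by exact_mod_cast hk) (le_of_lt hδ0)
    -- split the two series
    have hs1 := hTsum x hx i₀ (n + τ)
    have hs2 := hTsum x hx i₀ n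
    simp only [hT]
    rw [← Summable.sum_add_tsum_nat_add (K + 1) hs1, ← Summable.sum_add_tsum_nat_add (K + 1) hs2]
    -- tail bounds
    have htail : ∀ u : ℤ, |∑' (k : ℕ), P i₀ u (k + (K + 1)) * gf x i₀ (u - 1 - ((k + (K + 1) : ℕ) : ℤ))| ≤ ε / 4 := by
      intro u
      have hgsum : Summable fun k : ℕ => (MG * rmax ^ (K + 1)) * rmax ^ k :=
        (summable_geometric_of_lt_one hrmax0 hrmax1).mul_left _
      have hbd : ∀ k : ℕ, |P i₀ u (k + (K + 1)) * gf x i₀ (u - 1 - ((k + (K + 1) : ℕ) : ℤ))| ≤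
          (MG * rmax ^ (K + 1)) * rmax ^ k := by
        intro k
        rw [abs_mul]
        calc |P i₀ u (k + (K + 1))| * |gf x i₀ (u - 1 - ((k + (K + 1) : ℕ) : ℤ))|
            ≤ rmax ^ (k + (K + 1)) * MG :=
              mul_le_mul (hPrm i₀ u _) (hMGb i₀ _) (abs_nonneg _) (pow_nonneg hrmax0 _)
          _ = (MG * rmax ^ (K + 1)) * rmax ^ k := by rw [pow_add]; ring
      refine le_trans (abs_tsum_le' hgsum hbd) ?_
      rw [tsum_geom_mul hrmax0 hrmax1]
      have h1 : 1 - rmax = cmin := by simp only [hrmax]; ring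
      rw [h1]
      calc MG * rmax ^ (K + 1) / cmin = rmax ^ (K + 1) * MG / cmin := by ring
        _ ≤ ε / 4 := hK
    -- finite part bound
    have hfinite : |(∑ k ∈ Finset.range (K + 1), P i₀ (n + τ) k * gf x i₀ (n + τ - 1 - (k:ℤ))) -
        ∑ k ∈ Finset.range (K + 1), P i₀ n k * gf x i₀ (n - 1 - (k:ℤ))| ≤ X * δ := by
      rw [← Finset.sum_sub_distrib]
      refine le_trans (Finset.abs_sum_le_sum_abs _ _) ?_
      have hterm3 : ∀ k ∈ Finset.range (K + 1),
          |P i₀ (n + τ) k * gf x i₀ (n + τ - 1 - (k:ℤ)) - P i₀ n k * gf x i₀ (n - 1 - (k:ℤ))| ≤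
          (K : ℝ) * MG * δ + C * δ := by
        intro k hkmem
        have hk : k ≤ K := by
          have := Finset.mem_range.mp hkmem; omega
        have harg : n + τ - 1 - (k:ℤ) = (n - 1 - (k:ℤ)) + τ := by ring
        rw [harg]
        have h1 : P i₀ (n + τ) k * gf x i₀ ((n - 1 - (k:ℤ)) + τ) -
            P i₀ n k * gf x i₀ (n - 1 - (k:ℤ))
            = (P i₀ (n + τ) k - P i₀ n k) * gf x i₀ ((n - 1 - (k:ℤ)) + τ) +
              P i₀ n k * (gf x i₀ ((n - 1 - (k:ℤ)) + τ) - gf x i₀ (n - 1 - (k:ℤ))) := by ring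
        rw [h1]
        refine le_trans (abs_add_le _ _) ?_
        rw [abs_mul, abs_mul]
        have hP1 : |P i₀ n k| ≤ 1 := by
          rw [abs_of_nonneg (hPnn i₀ n k)]; exact hPle1 i₀ n k
        calc |P i₀ (n + τ) k - P i₀ n k| * |gf x i₀ ((n - 1 - (k:ℤ)) + τ)| +
              |P i₀ n k| * |gf x i₀ ((n - 1 - (k:ℤ)) + τ) - gf x i₀ (n - 1 - (k:ℤ))|
            ≤ ((K : ℝ) * δ) * MG + 1 * (C * δ) := by
              refine add_le_add (mul_le_mul (hPδ n k hk) (hMGb i₀ _) (abs_nonneg _)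
                (mul_nonneg (Nat.cast_nonneg K) (le_of_lt hδ0)))
                (mul_le_mul hP1 (hgfδ i₀ _) (abs_nonneg _) (by norm_num))
          _ = (K : ℝ) * MG * δ + C * δ := by ring
      refine le_trans (Finset.sum_le_sum hterm3) ?_
      rw [Finset.sum_const, Finset.card_range, nsmul_eq_mul]
      simp only [hXdef]
      have : ((K + 1 : ℕ) : ℝ) * ((K : ℝ) * MG * δ + C * δ) =
          ((K + 1 : ℕ) : ℝ) * ((K : ℝ) * MG + C) * δ := by ring
      rw [this]
    -- combine
    have hsplit : ((∑ k ∈ Finset.range (K + 1), P i₀ (n + τ) k * gf x i₀ (n + τ - 1 - (k:ℤ))) +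
          ∑' (k : ℕ), P i₀ (n + τ) (k + (K + 1)) * gf x i₀ (n + τ - 1 - ((k + (K + 1) : ℕ) : ℤ))) -
        ((∑ k ∈ Finset.range (K + 1), P i₀ n k * gf x i₀ (n - 1 - (k:ℤ))) +
          ∑' (k : ℕ), P i₀ n (k + (K + 1)) * gf x i₀ (n - 1 - ((k + (K + 1) : ℕ) : ℤ)))
        = ((∑ k ∈ Finset.range (K + 1), P i₀ (n + τ) k * gf x i₀ (n + τ - 1 - (k:ℤ))) -
            ∑ k ∈ Finset.range (K + 1), P i₀ n k * gf x i₀ (n - 1 - (k:ℤ))) +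
          (∑' (k : ℕ), P i₀ (n + τ) (k + (K + 1)) * gf x i₀ (n + τ - 1 - ((k + (K + 1) : ℕ) : ℤ))) -
          (∑' (k : ℕ), P i₀ n (k + (K + 1)) * gf x i₀ (n - 1 - ((k + (K + 1) : ℕ) : ℤ))) := by
      ring
    rw [hsplit]
    have ht1 := htail (n + τ)
    have ht2 := htail n
    have habs : |((∑ k ∈ Finset.range (K + 1), P i₀ (n + τ) k * gf x i₀ (n + τ - 1 - (k:ℤ))) -
            ∑ k ∈ Finset.range (K + 1), P i₀ n k * gf x i₀ (n - 1 - (k:ℤ))) +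
          (∑' (k : ℕ), P i₀ (n + τ) (k + (K + 1)) * gf x i₀ (n + τ - 1 - ((k + (K + 1) : ℕ) : ℤ))) -
          (∑' (k : ℕ), P i₀ n (k + (K + 1)) * gf x i₀ (n - 1 - ((k + (K + 1) : ℕ) : ℤ)))| ≤
        X * δ + ε / 4 + ε / 4 := by
      refine le_trans (abs_sub _ _) ?_
      refine add_le_add (le_trans (abs_add_le _ _) (add_le_add hfinite ht1)) ht2
    refine lt_of_le_of_lt habs ?_
    have := hδX
    linarith
  -- iterates of T starting from 0
  set xs : ℕ → ℤ → Fin m → ℝ := fun k => T^[k] (fun _ _ => 0) with hxs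
  have hxs0 : xs 0 = fun _ _ => (0:ℝ) := by simp only [hxs, Function.iterate_zero_apply]
  have hxs_succ : ∀ k, xs (k + 1) = T (xs k) := by
    intro k; simp only [hxs, Function.iterate_succ_apply']
  have hxsb : ∀ k (n : ℤ) i, |xs k n i| ≤ r₀ := by
    intro k
    induction k with
    | zero => intro n i; rw [hxs0]; simp only [abs_zero]; exact le_of_lt hr₀
    | succ k ih => rw [hxs_succ]; exact hTb (xs k) ih
  have hxsap : ∀ k i, APseq fun n => xs k n i := by
    intro k
    induction k with
    | zero =>
      intro i ε hε
      refine ⟨1, one_pos, fun p => ⟨p, le_refl p, by omega, fun n => ?_⟩⟩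
      rw [hxs0]; simpa using hε
    | succ k ih =>
      rw [hxs_succ]
      exact hTap (xs k) (hxsb k) ih
  have hdiff : ∀ k (n : ℤ) i, |xs (k + 1) n i - xs k n i| ≤ ρ ^ k * r₀ := by
    intro k
    induction k with
    | zero =>
      intro n i
      rw [hxs0, pow_zero, one_mul]
      simpa using hxsb 1 n i
    | succ k ih =>
      intro n i
      have h1 := hTlip (xs (k + 1)) (xs k) (hxsb (k + 1)) (hxsb k) (ρ ^ k * r₀)
        (mul_nonneg (pow_nonneg hρ0 k) (le_of_lt hr₀)) ih n i
      rw [← hxs_succ k, ← hxs_succ (k + 1)] at h1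
      calc |xs (k + 1 + 1) n i - xs (k + 1) n i| ≤ ρ * (ρ ^ k * r₀) := h1
        _ = ρ ^ (k + 1) * r₀ := by ring
  have hρsum : ∀ j : ℕ, (∑ t ∈ Finset.range j, ρ ^ t) ≤ (1 - ρ)⁻¹ := by
    intro j
    have hsummable : Summable fun t : ℕ => ρ ^ t := summable_geometric_of_lt_one hρ0 hρ1
    have h1 : (∑ t ∈ Finset.range j, ρ ^ t) ≤ ∑' t : ℕ, ρ ^ t :=
      Summable.sum_le_tsum (Finset.range j) (fun t _ => pow_nonneg hρ0 t) hsummable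
    rw [tsum_geometric_of_lt_one hρ0 hρ1] at h1
    exact h1
  set CC : ℝ := r₀ * (1 - ρ)⁻¹ with hCCdef
  have hCC0 : 0 ≤ CC := by
    have h1 : 0 < 1 - ρ := by linarith
    simp only [hCCdef]
    positivity
  have hgeo : ∀ k j (n : ℤ) i,
      |xs (k + j) n i - xs k n i| ≤ (∑ t ∈ Finset.range j, ρ ^ (k + t)) * r₀ := by
    intro k j
    induction j with
    | zero => intro n i; simp
    | succ j ih =>
      intro n i
      have h1 : k + (j + 1) = (k + j) + 1 := by ring
      rw [h1]
      calc |xs ((k + j) + 1) n i - xs k n i|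
          ≤ |xs ((k + j) + 1) n i - xs (k + j) n i| + |xs (k + j) n i - xs k n i| :=
            abs_sub_le _ _ _
        _ ≤ ρ ^ (k + j) * r₀ + (∑ t ∈ Finset.range j, ρ ^ (k + t)) * r₀ :=
            add_le_add (hdiff (k + j) n i) (ih n i)
        _ = (∑ t ∈ Finset.range (j + 1), ρ ^ (k + t)) * r₀ := by
            rw [Finset.sum_range_succ]; ring
  have hest : ∀ k j (n : ℤ) i, |xs (k + j) n i - xs k n i| ≤ ρ ^ k * CC := by
    intro k j n i
    refine le_trans (hgeo k j n i) ?_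
    have h1 : (∑ t ∈ Finset.range j, ρ ^ (k + t)) = ρ ^ k * ∑ t ∈ Finset.range j, ρ ^ t := by
      rw [Finset.mul_sum]; exact Finset.sum_congr rfl fun t _ => pow_add ρ k t
    rw [h1, hCCdef]
    calc ρ ^ k * (∑ t ∈ Finset.range j, ρ ^ t) * r₀ ≤ ρ ^ k * (1 - ρ)⁻¹ * r₀ :=
          mul_le_mul_of_nonneg_right
            (mul_le_mul_of_nonneg_left (hρsum j) (pow_nonneg hρ0 k)) (le_of_lt hr₀)
      _ = ρ ^ k * (r₀ * (1 - ρ)⁻¹) := by ring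
  have hestle : ∀ k j, k ≤ j → ∀ (n : ℤ) i, |xs j n i - xs k n i| ≤ ρ ^ k * CC := by
    intro k j hkj n i
    obtain ⟨t, rfl⟩ := Nat.exists_eq_add_of_le hkj
    exact hest k t n i
  -- the limit
  have hlim : ∀ (n : ℤ) i, ∃ L : ℝ, Tendsto (fun k => xs k n i) atTop (𝓝 L) := by
    intro n i
    have hcs : CauchySeq fun k => xs k n i := by
      apply cauchySeq_of_le_geometric ρ r₀ hρ1
      intro k
      rw [Real.dist_eq, abs_sub_comm]
      calc |xs (k + 1) n i - xs k n i| ≤ ρ ^ k * r₀ := hdiff k n i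
        _ = r₀ * ρ ^ k := by ring
    exact cauchySeq_tendsto_of_complete hcs
  choose xL hxL using fun n => fun i => hlim n i
  have hxLb : ∀ (n : ℤ) i, |xL n i| ≤ r₀ := by
    intro n i
    have h1 : Tendsto (fun k => |xs k n i|) atTop (𝓝 |xL n i|) := (hxL n i).abs
    exact le_of_tendsto h1 (Filter.Eventually.of_forall fun k => hxsb k n i)
  have hxLk : ∀ k (n : ℤ) i, |xL n i - xs k n i| ≤ ρ ^ k * CC := by
    intro k n i
    have h1 : Tendsto (fun j => |xs j n i - xs k n i|) atTop (𝓝 |xL n i - xs k n i|) :=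
      ((hxL n i).sub_const _).abs
    refine le_of_tendsto h1 ?_
    rw [Filter.eventually_atTop]
    exact ⟨k, fun j hj => hestle k j hj n i⟩
  have hsmall : ∀ M : ℝ, 0 ≤ M → ∀ ε : ℝ, 0 < ε → ∃ k : ℕ, ρ ^ k * M < ε := by
    intro M hM ε hε
    have h1 : Tendsto (fun k : ℕ => ρ ^ k * M) atTop (𝓝 0) := by
      have h2 := (tendsto_pow_atTop_nhds_zero_of_lt_one hρ0 hρ1).mul_const M
      rw [zero_mul] at h2
      exact h2
    exact (h1.eventually (gt_mem_nhds hε)).exists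
  have hxLap : ∀ i, APseq fun n => xL n i := by
    intro i
    refine APseq_of_uniform_approx _ ?_
    intro ε hε
    obtain ⟨k, hk⟩ := hsmall CC hCC0 ε hε
    exact ⟨fun n => xs k n i, hxsap k i, fun n => le_trans (hxLk k n i) (le_of_lt hk)⟩
  -- xL is a fixed point
  have hfix : ∀ (n : ℤ) i, T xL n i = xL n i := by
    intro n i
    have h0 : ∀ ε : ℝ, 0 < ε → |T xL n i - xL n i| ≤ ε := by
      intro ε hε
      obtain ⟨k, hk⟩ := hsmall (CC * (ρ + 1)) (mul_nonneg hCC0 (by linarith)) ε hε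
      have h1 : |T xL n i - xs (k + 1) n i| ≤ ρ * (ρ ^ k * CC) := by
        rw [hxs_succ k]
        exact hTlip xL (xs k) hxLb (hxsb k) (ρ ^ k * CC)
          (mul_nonneg (pow_nonneg hρ0 k) hCC0) (fun n i => hxLk k n i) n i
      have h2 : |xs (k + 1) n i - xL n i| ≤ ρ ^ (k + 1) * CC := by
        rw [abs_sub_comm]; exact hxLk (k + 1) n i
      calc |T xL n i - xL n i|
          ≤ |T xL n i - xs (k + 1) n i| + |xs (k + 1) n i - xL n i| := abs_sub_le _ _ _
        _ ≤ ρ * (ρ ^ k * CC) + ρ ^ (k + 1) * CC := add_le_add h1 h2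
        _ = ρ ^ k * CC * (2 * ρ) := by ring
        _ ≤ ρ ^ k * CC * (ρ + 1) := by
            refine mul_le_mul_of_nonneg_left (by linarith) ?_
            exact mul_nonneg (pow_nonneg hρ0 k) hCC0
        _ = ρ ^ k * (CC * (ρ + 1)) := by ring
        _ ≤ ε := le_of_lt hk
    have h1 : |T xL n i - xL n i| ≤ 0 := by
      by_contra hcon
      push_neg at hcon
      have := h0 (|T xL n i - xL n i| / 2) (by linarith)
      linarith
    have h2 : T xL n i - xL n i = 0 :=
      abs_eq_zero.mp (le_antisymm h1 (abs_nonneg _))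
    linarith
  -- xL satisfies the recurrence
  have hrecL : ∀ (n : ℤ) i, xL (n + 1) i = (1 - c i n) * xL n i + gf xL i n := by
    intro n i
    calc xL (n + 1) i = T xL (n + 1) i := (hfix (n + 1) i).symm
      _ = (1 - c i n) * T xL n i + gf xL i n := hTrec xL hxLb n i
      _ = (1 - c i n) * xL n i + gf xL i n := by rw [hfix n i]
  have hgoalrec : ∀ (n : ℤ) (i : Fin m),
      xL (n + 1) i - xL n i =
        -(c i n) * xL n i +
        (∑ j, a i j n * F j (xL (n - γ i j n) j)) +
        (∑ j, ∑ l, b i j l n * G j (xL (n - ω i j l n) j) * G l (xL (n - v i j l n) l)) +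
        I i n := by
    intro n i
    have h1 := hrecL n i
    simp only [hgf] at h1
    rw [h1]
    ring
  refine ⟨xL, ⟨hgoalrec, hxLap, hxLb⟩, ?_⟩
  -- uniqueness
  intro y hy
  obtain ⟨hyrec, hyap, hyb⟩ := hy
  have hyrec' : ∀ (n : ℤ) i, y (n + 1) i = (1 - c i n) * y n i + gf y i n := by
    intro n i
    have h1 := hyrec n i
    simp only [hgf]
    rw [sub_eq_iff_eq_add'] at h1
    rw [h1]
    ring
  set σ : ℝ := Finset.univ.sup' huniv (fun i => (1 - cm i) + etb i) with hσdef
  have hσ0 : 0 ≤ σ := by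
    obtain ⟨i⟩ := hne
    refine le_trans (add_nonneg (hr0 i) (hetbnn i)) ?_
    rw [hσdef]
    exact Finset.le_sup' (fun i => (1 - cm i) + etb i) (Finset.mem_univ i)
  have hσle : ∀ i, (1 - cm i) + etb i ≤ σ := by
    intro i
    rw [hσdef]
    exact Finset.le_sup' (fun i => (1 - cm i) + etb i) (Finset.mem_univ i)
  have hσ1 : σ < 1 := by
    rw [hσdef, Finset.sup'_lt_iff]
    intro i _
    have h1 := H4b i i
    simp only [hetb]
    linarith
  have hkey : ∀ K : ℕ, ∀ (n : ℤ) i, |y n i - xL n i| ≤ σ ^ K * (2 * r₀) := by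
    intro K
    induction K with
    | zero =>
      intro n i
      rw [pow_zero, one_mul]
      calc |y n i - xL n i| ≤ |y n i| + |xL n i| := abs_sub _ _
        _ ≤ 2 * r₀ := by have := hyb n i; have := hxLb n i; linarith
    | succ K ih =>
      intro n i
      have hd0 : 0 ≤ σ ^ K * (2 * r₀) :=
        mul_nonneg (pow_nonneg hσ0 K) (by linarith)
      have hn : n = (n - 1) + 1 := by ring
      rw [hn, hyrec' (n - 1) i, hrecL (n - 1) i]
      have h1 : (1 - c i (n - 1)) * y (n - 1) i + gf y i (n - 1) -
          ((1 - c i (n - 1)) * xL (n - 1) i + gf xL i (n - 1))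
          = (1 - c i (n - 1)) * (y (n - 1) i - xL (n - 1) i) +
            (gf y i (n - 1) - gf xL i (n - 1)) := by ring
      rw [h1]
      have h2 := hgfl y xL (σ ^ K * (2 * r₀)) hd0 (fun u j => ih u j) hyb hxLb i (n - 1)
      refine le_trans (abs_add_le _ _) ?_
      rw [abs_mul, abs_of_nonneg (hfac0 i (n - 1))]
      calc (1 - c i (n - 1)) * |y (n - 1) i - xL (n - 1) i| +
            |gf y i (n - 1) - gf xL i (n - 1)|
          ≤ (1 - cm i) * (σ ^ K * (2 * r₀)) + etb i * (σ ^ K * (2 * r₀)) := by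
            refine add_le_add ?_ h2
            exact mul_le_mul (hfacle i (n - 1)) (ih (n - 1) i) (abs_nonneg _) (hr0 i)
        _ = ((1 - cm i) + etb i) * (σ ^ K * (2 * r₀)) := by ring
        _ ≤ σ * (σ ^ K * (2 * r₀)) := mul_le_mul_of_nonneg_right (hσle i) hd0
        _ = σ ^ (K + 1) * (2 * r₀) := by ring
  have hyx : ∀ (n : ℤ) i, y n i = xL n i := by
    intro n i
    have h0 : ∀ ε : ℝ, 0 < ε → |y n i - xL n i| ≤ ε := by
      intro ε hε
      have h1 : Tendsto (fun K : ℕ => σ ^ K * (2 * r₀)) atTop (𝓝 0) := by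
        have h2 := (tendsto_pow_atTop_nhds_zero_of_lt_one hσ0 hσ1).mul_const (2 * r₀)
        rw [zero_mul] at h2
        exact h2
      obtain ⟨K, hK⟩ := (h1.eventually (gt_mem_nhds hε)).exists
      exact le_trans (hkey K n i) (le_of_lt hK)
    have h1 : |y n i - xL n i| ≤ 0 := by
      by_contra hcon
      push_neg at hcon
      have := h0 (|y n i - xL n i| / 2) (by linarith)
      linarith
    have h2 : y n i - xL n i = 0 := abs_eq_zero.mp (le_antisymm h1 (abs_nonneg _))
    linarith
  funext n
  funext i
  exact hyx n i
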